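/- Let L : H → G be bounded linear with 0 < ‖L‖ ≤ 1, let γ > 0, let λ ∈ (0,1), and let A, B be strictly positive operators on G. Then λ(L ⊡_γ A) + (1−λ)(L ⊡_γ B) ≼ L ⊡_γ (λA + (1−λ)B), i.e., the map A ↦ L ⊡_γ A is operator-concave, where L ⊡_γ A = L* ∘ (A⁻¹ + γ(Id_G − L L*))⁻¹ ∘ L. -/

import Mathlib

open ContinuousLinearMap MeasureTheory

noncomputable section

variable {E : Type*} [NormedAddCommGroup E] [InnerProductSpace ℝ E] [CompleteSpace E]
variable {H G : Type*} [NormedAddCommGroup H] [InnerProductSpace ℝ H] [CompleteSpace H]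
  [NormedAddCommGroup G] [InnerProductSpace ℝ G] [CompleteSpace G]

/-- Löwner partial order: `A ≼ B` iff `B - A` is a positive operator. -/
def Loewner (A B : E →L[ℝ] E) : Prop := (B - A).IsPositive

/-- Strictly positive operators: `α • Id ≼ A` for some `α > 0`. -/
def StrictlyPos (A : E →L[ℝ] E) : Prop :=
  IsSelfAdjoint A ∧ ∃ α : ℝ, 0 < α ∧ Loewner (α • (1 : E →L[ℝ] E)) A

/-- Bounded below linear operator. -/
def BoundedBelow (L : H →L[ℝ] G) : Prop := ∃ β : ℝ, 0 < β ∧ ∀ x : H, β * ‖x‖ ≤ ‖L x‖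

/-- Resolvent cocomposition `L ⊡_γ B = L* ∘ (B⁻¹ + γ(Id − L L*))⁻¹ ∘ L`. -/
def rcc (L : H →L[ℝ] G) (γ : ℝ) (B : G →L[ℝ] G) : H →L[ℝ] H :=
  (adjoint L) ∘L (Ring.inverse (Ring.inverse B + γ • ((1 : G →L[ℝ] G) - L ∘L adjoint L))) ∘L L

/-- Resolvent composition `L ⊙_γ B = (L ⊡_{1/γ} B⁻¹)⁻¹`. -/
def rc (L : H →L[ℝ] G) (γ : ℝ) (B : G →L[ℝ] G) : H →L[ℝ] H :=
  Ring.inverse (rcc L (1/γ) (Ring.inverse B))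

/-- Parallel composition `L* ▸ B = (L* ∘ B⁻¹ ∘ L)⁻¹`. -/
def parallelComp (L : H →L[ℝ] G) (B : G →L[ℝ] G) : H →L[ℝ] H :=
  Ring.inverse ((adjoint L) ∘L (Ring.inverse B) ∘L L)

/-- `g(A,B) = inf {λ > 0 : A ≼ λ B}`. -/
def gThomp (A B : E →L[ℝ] E) : ℝ := sInf {l : ℝ | 0 < l ∧ Loewner A (l • B)}

/-- Thompson metric. -/
def dThomp (A B : E →L[ℝ] E) : ℝ := Real.log (max (gThomp A B) (gThomp B A))

/-- The (unique) positive square root of a positive operator. -/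
def opSqrt (A : E →L[ℝ] E) : E →L[ℝ] E :=
  letI := Classical.propDecidable
  if h : ∃ S : E →L[ℝ] E, S.IsPositive ∧ S * S = A then h.choose else 0

/-- Real power `A^t` of a strictly positive operator, `t ∈ (0,1)`, via the
Balakrishnan integral formula `A^t = (sin (π t)/π) ∫₀^∞ s^{t-1} A (A + s)⁻¹ ds`. -/
def opRpow (A : E →L[ℝ] E) (t : ℝ) : E →L[ℝ] E :=
  (Real.sin (Real.pi * t) / Real.pi) •
    ∫ s in Set.Ioi (0 : ℝ), s ^ (t - 1) • (A * Ring.inverse (A + s • (1 : E →L[ℝ] E)))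

/-- Geometric mean `A # B = A^{1/2} (A^{-1/2} B A^{-1/2})^{1/2} A^{1/2}`. -/
def geomMean (A B : E →L[ℝ] E) : E →L[ℝ] E :=
  opSqrt A * opSqrt (Ring.inverse (opSqrt A) * B * Ring.inverse (opSqrt A)) * opSqrt A

/-- `t`-weighted geometric mean `A #_t B = A^{1/2} (A^{-1/2} B A^{-1/2})^t A^{1/2}`. -/
def wGeomMean (t : ℝ) (A B : E →L[ℝ] E) : E →L[ℝ] E :=
  opSqrt A * opRpow (Ring.inverse (opSqrt A) * B * Ring.inverse (opSqrt A)) t * opSqrt A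

open RealInnerProductSpace

lemma isPositive_inner {T : E →L[ℝ] E} (hT : T.IsPositive) (x : E) : 0 ≤ ⟪T x, x⟫ := by
  have := hT.2 x
  simpa [ContinuousLinearMap.reApplyInnerSelf_apply] using this

lemma isPositive_of_inner {T : E →L[ℝ] E} (hsa : IsSelfAdjoint T)
    (h : ∀ x, 0 ≤ ⟪T x, x⟫) : T.IsPositive := by
  refine ⟨ContinuousLinearMap.isSelfAdjoint_iff_isSymmetric.mp hsa, fun x => ?_⟩
  simpa [ContinuousLinearMap.reApplyInnerSelf_apply] using h x

lemma strictlyPos_inner {S : E →L[ℝ] E} (hS : StrictlyPos S) :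
    ∃ α : ℝ, 0 < α ∧ ∀ x : E, α * (‖x‖ * ‖x‖) ≤ ⟪S x, x⟫ := by
  obtain ⟨hsa, α, hα, hpos⟩ := hS
  refine ⟨α, hα, fun x => ?_⟩
  have h := isPositive_inner hpos x
  simp only [ContinuousLinearMap.sub_apply, ContinuousLinearMap.smul_apply,
    ContinuousLinearMap.one_apply, inner_sub_left, real_inner_smul_left,
    real_inner_self_eq_norm_mul_norm] at h
  linarith

lemma strictlyPos_of_inner {S : E →L[ℝ] E} (hsa : IsSelfAdjoint S) {α : ℝ} (hα : 0 < α)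
    (h : ∀ x, α * (‖x‖ * ‖x‖) ≤ ⟪S x, x⟫) : StrictlyPos S := by
  refine ⟨hsa, α, hα, ?_⟩
  have hsa1 : IsSelfAdjoint (α • (1 : E →L[ℝ] E)) := by
    rw [IsSelfAdjoint, star_smul, star_trivial, star_one]
  refine isPositive_of_inner (hsa.sub hsa1) fun x => ?_
  simp only [ContinuousLinearMap.sub_apply, ContinuousLinearMap.smul_apply,
    ContinuousLinearMap.one_apply, inner_sub_left, real_inner_smul_left,
    real_inner_self_eq_norm_mul_norm]
  linarith [h x]

lemma StrictlyPos.isUnitCLM {S : E →L[ℝ] E} (hS : StrictlyPos S) : IsUnit S := by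
  obtain ⟨α, hα, hcoer⟩ := strictlyPos_inner hS
  have below : ∀ v, α * ‖v‖ ≤ ‖S v‖ := by
    intro v
    rcases eq_or_ne v 0 with rfl | hv
    · simp
    · have h0 : 0 < ‖v‖ := norm_pos_iff.mpr hv
      have h1 := hcoer v
      have h2 : ⟪S v, v⟫ ≤ ‖S v‖ * ‖v‖ := real_inner_le_norm _ _
      nlinarith
  have anti : AntilipschitzWith (α⁻¹).toNNReal S := by
    refine ContinuousLinearMap.antilipschitz_of_bound S ?_
    intro x
    rw [Real.coe_toNNReal', max_eq_left_of_lt (inv_pos.mpr hα)]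
    have h := below x
    rw [inv_mul_eq_div, le_div_iff₀ hα]
    nlinarith
  have hker : LinearMap.ker (S : E →ₗ[ℝ] E) = ⊥ := by
    rw [LinearMap.ker_eq_bot]; exact anti.injective
  have hclosed : IsClosed (LinearMap.range (S : E →ₗ[ℝ] E) : Set E) :=
    by rw [LinearMap.coe_range]; exact anti.isClosed_range S.uniformContinuous
  have hrange : LinearMap.range (S : E →ₗ[ℝ] E) = ⊤ := by
    haveI := hclosed.completeSpace_coe
    rw [← (LinearMap.range (S : E →ₗ[ℝ] E)).orthogonal_orthogonal, Submodule.eq_top_iff']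
    intro v
    intro w mem_w_orthogonal
    obtain rfl : w = 0 := by
      have h1 : ⟪S w, w⟫ = 0 := mem_w_orthogonal _ ⟨w, rfl⟩
      have h2 := hcoer w
      rw [h1] at h2
      have h4 : ‖w‖ * ‖w‖ ≤ 0 := by nlinarith [mul_nonneg (norm_nonneg w) (norm_nonneg w)]
      have h5 : ‖w‖ * ‖w‖ = 0 := le_antisymm h4 (mul_nonneg (norm_nonneg w) (norm_nonneg w))
      exact norm_eq_zero.mp (mul_self_eq_zero.mp h5)
    exact inner_zero_left _
  let e := ContinuousLinearEquiv.ofBijective S hker hrange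
  refine ⟨⟨S, (e.symm : E →L[ℝ] E), ?_, ?_⟩, rfl⟩
  · ext x
    exact e.apply_symm_apply x
  · ext x
    exact e.symm_apply_apply x

lemma IsSelfAdjoint.inner_symm {T : E →L[ℝ] E} (hT : IsSelfAdjoint T) (x y : E) :
    ⟪T x, y⟫ = ⟪x, T y⟫ := by
  have h : ContinuousLinearMap.adjoint T = T := by
    rw [← ContinuousLinearMap.star_eq_adjoint, hT.star_eq]
  conv_lhs => rw [← h]
  exact ContinuousLinearMap.adjoint_inner_left T y x

lemma IsSelfAdjoint.ringInverseCLM {S : E →L[ℝ] E} (hsa : IsSelfAdjoint S) (hU : IsUnit S) :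
    IsSelfAdjoint (Ring.inverse S) := by
  have h1 : S * Ring.inverse S = 1 := Ring.mul_inverse_cancel S hU
  have h2 : star (Ring.inverse S) * S = 1 := by
    have h3 := congrArg star h1
    rw [star_mul, star_one, hsa.star_eq] at h3
    exact h3
  calc star (Ring.inverse S) = star (Ring.inverse S) * (S * Ring.inverse S) := by
        rw [h1, mul_one]
    _ = star (Ring.inverse S) * S * Ring.inverse S := by rw [mul_assoc]
    _ = Ring.inverse S := by rw [h2, one_mul]

lemma apply_ringInverse_CLM {S : E →L[ℝ] E} (hU : IsUnit S) (x : E) :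
    S (Ring.inverse S x) = x := by
  have h := congrArg (fun T : E →L[ℝ] E => T x) (Ring.mul_inverse_cancel S hU)
  simpa [ContinuousLinearMap.mul_apply] using h

lemma ringInverse_apply_CLM {S : E →L[ℝ] E} (hU : IsUnit S) (x : E) :
    Ring.inverse S (S x) = x := by
  have h := congrArg (fun T : E →L[ℝ] E => T x) (Ring.inverse_mul_cancel S hU)
  simpa [ContinuousLinearMap.mul_apply] using h

lemma StrictlyPos.ringInverse {S : E →L[ℝ] E} (hS : StrictlyPos S) :
    StrictlyPos (Ring.inverse S) := by
  obtain ⟨α, hα, hcoer⟩ := strictlyPos_inner hS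
  have hU := hS.isUnitCLM
  have hsaInv := hS.1.ringInverseCLM hU
  have hSSi : ∀ x, S (Ring.inverse S x) = x := apply_ringInverse_CLM hU
  set c : ℝ := max ‖S‖ 1 with hc
  have hc1 : 0 < c := lt_of_lt_of_le one_pos (le_max_right _ _)
  refine strictlyPos_of_inner hsaInv (α := α / (c * c)) (by positivity) fun x => ?_
  have h1 : α * (‖Ring.inverse S x‖ * ‖Ring.inverse S x‖) ≤ ⟪x, Ring.inverse S x⟫ := by
    have := hcoer (Ring.inverse S x)
    rwa [hSSi x] at this
  have h2 : ‖x‖ ≤ c * ‖Ring.inverse S x‖ := by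
    calc ‖x‖ = ‖S (Ring.inverse S x)‖ := by rw [hSSi x]
      _ ≤ ‖S‖ * ‖Ring.inverse S x‖ := S.le_opNorm _
      _ ≤ c * ‖Ring.inverse S x‖ := by
          apply mul_le_mul_of_nonneg_right (le_max_left _ _) (norm_nonneg _)
  have h3 : ⟪Ring.inverse S x, x⟫ = ⟪x, Ring.inverse S x⟫ := real_inner_comm _ _
  rw [h3]
  rw [div_mul_eq_mul_div, div_le_iff₀ (by positivity)]
  have h4 : ‖x‖ * ‖x‖ ≤ (c * ‖Ring.inverse S x‖) * (c * ‖Ring.inverse S x‖) :=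
    mul_self_le_mul_self (norm_nonneg x) h2
  have h5 := mul_le_mul_of_nonneg_left h4 hα.le
  have h6 := mul_le_mul_of_nonneg_left h1 (mul_nonneg hc1.le hc1.le)
  nlinarith [h5, h6]

lemma strictlyPos_add_isPositive {S C : E →L[ℝ] E} (hS : StrictlyPos S)
    (hC : C.IsPositive) : StrictlyPos (S + C) := by
  obtain ⟨α, hα, hcoer⟩ := strictlyPos_inner hS
  refine strictlyPos_of_inner (hS.1.add hC.isSelfAdjoint) hα fun x => ?_
  have h1 := isPositive_inner hC x
  simp only [ContinuousLinearMap.add_apply, inner_add_left]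
  linarith [hcoer x]

lemma key_ineq {S C : E →L[ℝ] E} (hS : StrictlyPos S) (hC : C.IsPositive)
    (w y v : E) (hw : w = y + C v) :
    ⟪Ring.inverse (Ring.inverse S + C) w, w⟫ ≤ ⟪S y, y⟫ + ⟪C v, v⟫ := by
  have hU := hS.isUnitCLM
  have hM : StrictlyPos (Ring.inverse S + C) := strictlyPos_add_isPositive hS.ringInverse hC
  have hUM := hM.isUnitCLM
  set Si := Ring.inverse S with hSi
  set M := Si + C with hMdef
  set u := Ring.inverse M w with hu
  have hMu : M u = w := apply_ringInverse_CLM hUM w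
  have hSSi : S (Si u) = u := apply_ringInverse_CLM hU u
  -- expansion identities
  have e1 : ⟪S (y - Si u), y - Si u⟫ = ⟪S y, y⟫ - 2 * ⟪u, y⟫ + ⟪u, Si u⟫ := by
    have h2 : ⟪S y, Si u⟫ = ⟪y, u⟫ := by rw [hS.1.inner_symm y (Si u), hSSi]
    rw [map_sub, inner_sub_left, inner_sub_right, inner_sub_right, h2, hSSi,
      real_inner_comm y u]
    ring
  have e2 : ⟪C (v - u), v - u⟫ = ⟪C v, v⟫ - 2 * ⟪C v, u⟫ + ⟪C u, u⟫ := by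
    have h4 : ⟪C u, v⟫ = ⟪C v, u⟫ := by
      rw [hC.inner_left_eq_inner_right u v]; exact real_inner_comm _ _
    rw [map_sub, inner_sub_left, inner_sub_right, inner_sub_right, h4]
    ring
  -- relations involving w
  have hwid : ⟪u, w⟫ = ⟪u, y⟫ + ⟪C v, u⟫ := by
    rw [hw, inner_add_right]
    congr 1
    rw [real_inner_comm]
  have hwid2 : ⟪u, w⟫ = ⟪u, Si u⟫ + ⟪C u, u⟫ := by
    conv_lhs => rw [← hMu]
    rw [hMdef]
    simp only [ContinuousLinearMap.add_apply, inner_add_right]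
    congr 1
    rw [real_inner_comm]
  have p1 : 0 ≤ ⟪S (y - Si u), y - Si u⟫ := by
    obtain ⟨α, hα, hcoer⟩ := strictlyPos_inner hS
    have := hcoer (y - Si u)
    nlinarith [norm_nonneg (y - Si u)]
  have p2 : 0 ≤ ⟪C (v - u), v - u⟫ := isPositive_inner hC _
  have hgoal : ⟪Ring.inverse M w, w⟫ = ⟪u, w⟫ := rfl
  rw [hgoal]
  have h6 : ⟪u, y⟫ = ⟪y, u⟫ := real_inner_comm _ _
  linarith

lemma isSelfAdjoint_conj {H G : Type*} [NormedAddCommGroup H] [InnerProductSpace ℝ H]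
    [CompleteSpace H] [NormedAddCommGroup G] [InnerProductSpace ℝ G] [CompleteSpace G]
    {N : G →L[ℝ] G} (hN : IsSelfAdjoint N) (L : H →L[ℝ] G) :
    IsSelfAdjoint ((ContinuousLinearMap.adjoint L) ∘L N ∘L L) := by
  have hN' : ContinuousLinearMap.adjoint N = N := by
    rw [← ContinuousLinearMap.star_eq_adjoint, hN.star_eq]
  rw [IsSelfAdjoint, ContinuousLinearMap.star_eq_adjoint, ContinuousLinearMap.adjoint_comp,
    ContinuousLinearMap.adjoint_comp, ContinuousLinearMap.adjoint_adjoint, hN',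
    ContinuousLinearMap.comp_assoc]


theorem rcc_concave (L : H →L[ℝ] G) (hL0 : 0 < ‖L‖) (hL1 : ‖L‖ ≤ 1)
    (γ : ℝ) (hγ : 0 < γ) (l : ℝ) (hl0 : 0 < l) (hl1 : l < 1)
    (A B : G →L[ℝ] G) (hA : StrictlyPos A) (hB : StrictlyPos B) :
    Loewner (l • rcc L γ A + (1 - l) • rcc L γ B)
      (rcc L γ (l • A + (1 - l) • B)) := by
  set C : G →L[ℝ] G := γ • ((1 : G →L[ℝ] G) - L ∘L adjoint L) with hCdef
  have hLLsa : IsSelfAdjoint (L ∘L adjoint L) := by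
    rw [IsSelfAdjoint, ContinuousLinearMap.star_eq_adjoint, ContinuousLinearMap.adjoint_comp,
      ContinuousLinearMap.adjoint_adjoint]
  have hCsa : IsSelfAdjoint C := by
    have h1 : IsSelfAdjoint ((1 : G →L[ℝ] G) - L ∘L adjoint L) :=
      (IsSelfAdjoint.one (G →L[ℝ] G)).sub hLLsa
    rw [hCdef, IsSelfAdjoint, star_smul, star_trivial, h1.star_eq]
  have hC : C.IsPositive := by
    refine isPositive_of_inner hCsa fun x => ?_
    have hx : ⟪(L ∘L adjoint L) x, x⟫ = ⟪adjoint L x, adjoint L x⟫ := by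
      rw [ContinuousLinearMap.comp_apply]
      exact (ContinuousLinearMap.adjoint_inner_right L (adjoint L x) x).symm
    have hnadj : ‖adjoint L x‖ ≤ ‖x‖ := by
      calc ‖adjoint L x‖ ≤ ‖adjoint L‖ * ‖x‖ := (adjoint L).le_opNorm x
        _ = ‖L‖ * ‖x‖ := by rw [ContinuousLinearMap.adjoint.norm_map L]
        _ ≤ 1 * ‖x‖ := mul_le_mul_of_nonneg_right hL1 (norm_nonneg x)
        _ = ‖x‖ := one_mul _
    rw [hCdef]
    simp only [ContinuousLinearMap.smul_apply, ContinuousLinearMap.sub_apply,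
      ContinuousLinearMap.one_apply, real_inner_smul_left, inner_sub_left, hx,
      real_inner_self_eq_norm_mul_norm]
    have : ‖adjoint L x‖ * ‖adjoint L x‖ ≤ ‖x‖ * ‖x‖ :=
      mul_self_le_mul_self (norm_nonneg _) hnadj
    nlinarith
  set Al := l • A + (1 - l) • B with hAldef
  have hAlsa : IsSelfAdjoint Al := by
    rw [hAldef, IsSelfAdjoint, star_add, star_smul, star_smul, star_trivial l,
      star_trivial (1 - l), hA.1.star_eq, hB.1.star_eq]
  have hAl : StrictlyPos Al := by
    obtain ⟨a, ha, hca⟩ := strictlyPos_inner hA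
    obtain ⟨b, hb, hcb⟩ := strictlyPos_inner hB
    refine strictlyPos_of_inner hAlsa (α := l * a + (1 - l) * b) (by nlinarith) fun x => ?_
    simp only [hAldef, ContinuousLinearMap.add_apply, ContinuousLinearMap.smul_apply,
      inner_add_left, real_inner_smul_left]
    nlinarith [hca x, hcb x]
  have hMA : StrictlyPos (Ring.inverse A + C) := strictlyPos_add_isPositive hA.ringInverse hC
  have hMB : StrictlyPos (Ring.inverse B + C) := strictlyPos_add_isPositive hB.ringInverse hC
  have hMl : StrictlyPos (Ring.inverse Al + C) := strictlyPos_add_isPositive hAl.ringInverse hC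
  have hNA : IsSelfAdjoint (Ring.inverse (Ring.inverse A + C)) :=
    hMA.1.ringInverseCLM hMA.isUnitCLM
  have hNB : IsSelfAdjoint (Ring.inverse (Ring.inverse B + C)) :=
    hMB.1.ringInverseCLM hMB.isUnitCLM
  have hNl : IsSelfAdjoint (Ring.inverse (Ring.inverse Al + C)) :=
    hMl.1.ringInverseCLM hMl.isUnitCLM
  have hsaA : IsSelfAdjoint (rcc L γ A) := isSelfAdjoint_conj hNA L
  have hsaB : IsSelfAdjoint (rcc L γ B) := isSelfAdjoint_conj hNB L
  have hsal : IsSelfAdjoint (rcc L γ Al) := isSelfAdjoint_conj hNl L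
  have hsadiff : IsSelfAdjoint
      (rcc L γ Al - (l • rcc L γ A + (1 - l) • rcc L γ B)) := by
    rw [IsSelfAdjoint, star_sub, star_add, star_smul, star_smul, star_trivial l,
      star_trivial (1 - l), hsaA.star_eq, hsaB.star_eq, hsal.star_eq]
  refine isPositive_of_inner hsadiff fun x => ?_
  simp only [ContinuousLinearMap.sub_apply, ContinuousLinearMap.add_apply,
    ContinuousLinearMap.smul_apply, inner_sub_left, inner_add_left, real_inner_smul_left]
  set w := L x with hwdef
  have hq : ∀ N : G →L[ℝ] G, ⟪(adjoint L ∘L N ∘L L) x, x⟫ = ⟪N w, w⟫ := fun N =>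
    ContinuousLinearMap.adjoint_inner_left L x (N w)
  have e1 : ⟪rcc L γ A x, x⟫ = ⟪Ring.inverse (Ring.inverse A + C) w, w⟫ :=
    hq (Ring.inverse (Ring.inverse A + C))
  have e2 : ⟪rcc L γ B x, x⟫ = ⟪Ring.inverse (Ring.inverse B + C) w, w⟫ :=
    hq (Ring.inverse (Ring.inverse B + C))
  have e3 : ⟪rcc L γ Al x, x⟫ = ⟪Ring.inverse (Ring.inverse Al + C) w, w⟫ :=
    hq (Ring.inverse (Ring.inverse Al + C))
  rw [e1, e2, e3]
  set v := Ring.inverse (Ring.inverse Al + C) w with hv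
  set y := Ring.inverse Al v with hy
  have hUl := hAl.isUnitCLM
  have hUMl := hMl.isUnitCLM
  have hMv : (Ring.inverse Al + C) v = w := apply_ringInverse_CLM hUMl w
  have hw : w = y + C v := by
    conv_lhs => rw [← hMv]
    rw [ContinuousLinearMap.add_apply]
  have hAy : Al y = v := apply_ringInverse_CLM hUl v
  have keyA : ⟪Ring.inverse (Ring.inverse A + C) w, w⟫ ≤ ⟪A y, y⟫ + ⟪C v, v⟫ :=
    key_ineq hA hC w y v hw
  have keyB : ⟪Ring.inverse (Ring.inverse B + C) w, w⟫ ≤ ⟪B y, y⟫ + ⟪C v, v⟫ :=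
    key_ineq hB hC w y v hw
  have eql : ⟪v, w⟫ = ⟪Al y, y⟫ + ⟪C v, v⟫ := by
    have h2 : ⟪v, y⟫ = ⟪Al y, y⟫ := by rw [hAy]
    conv_lhs => rw [hw]
    rw [inner_add_right, h2, real_inner_comm (C v) v]
  have hsplit : ⟪Al y, y⟫ = l * ⟪A y, y⟫ + (1 - l) * ⟪B y, y⟫ := by
    rw [hAldef]
    simp only [ContinuousLinearMap.add_apply, ContinuousLinearMap.smul_apply,
      inner_add_left, real_inner_smul_left]
  have k1 := mul_le_mul_of_nonneg_left keyA hl0.le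
  have k2 := mul_le_mul_of_nonneg_left keyB (by linarith : (0:ℝ) ≤ 1 - l)
  linarith


end
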